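/- If p_1,...,p_m are mutually independent p-values such that for each j in a set of true nulls H_0 ⊆ [m], P(p_j ≤ t) ≤ t for all t ∈ [0,1], then the Benjamini–Hochberg procedure at level α controls the false discovery rate: E[#(S ∩ H_0)/max(|S|,1)] ≤ α|H_0|/m ≤ α. -/

import Mathlib

open MeasureTheory ProbabilityTheory
/-- The k-th order statistic `p_(k)` of the p-values (1-indexed). -/
noncomputable def orderStat {m : ℕ} (p : Fin m → ℝ) (k : ℕ) : ℝ :=
  (Multiset.sort (Multiset.map p Finset.univ.val) (· ≤ ·)).getD (k - 1) 0

/-- `k* = max{k ∈ [m] : p_(k) ≤ α k / m}`, with `max ∅ = 0`. -/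
noncomputable def kstar {m : ℕ} (p : Fin m → ℝ) (α : ℝ) : ℕ :=
  sSup {k | k ∈ Finset.Icc 1 m ∧ orderStat p k ≤ α * k / m}

/-- The Benjamini–Hochberg rejection set `S = {j : p_j ≤ α k*/m}`. -/
noncomputable def BH {m : ℕ} (p : Fin m → ℝ) (α : ℝ) : Finset (Fin m) :=
  Finset.univ.filter (fun j => p j ≤ α * (kstar p α) / m)

namespace BHproof


theorem sorted_getElem_le_iff {l : List ℝ} (hs : l.Pairwise (· ≤ ·)) {k : ℕ} (hk : k < l.length)
    (t : ℝ) : l[k] ≤ t ↔ k + 1 ≤ l.countP (fun x => decide (x ≤ t)) := by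
  constructor
  · intro h
    have h1 : l.countP (fun x => decide (x ≤ t)) =
        (l.take (k+1)).countP (fun x => decide (x ≤ t)) +
        (l.drop (k+1)).countP (fun x => decide (x ≤ t)) := by
      rw [← List.countP_append, List.take_append_drop]
    have h2 : (l.take (k+1)).countP (fun x => decide (x ≤ t)) = (l.take (k+1)).length := by
      rw [List.countP_eq_length]
      intro a ha
      simp only [decide_eq_true_eq]
      obtain ⟨i, hi, rfl⟩ := List.mem_take_iff_getElem.mp ha
      have hik : i < l.length := lt_of_lt_of_le (lt_of_lt_of_le hi (min_le_left _ _)) hk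
      calc l[i] ≤ l[k] := by
            have := List.Pairwise.rel_get_of_le hs (a := ⟨i, hik⟩) (b := ⟨k, hk⟩)
              (Nat.le_of_lt_succ (lt_of_lt_of_le hi (min_le_left _ _)))
            simpa [List.get_eq_getElem] using this
        _ ≤ t := h
    have h3 : (l.take (k+1)).length = k + 1 := by
      rw [List.length_take]; omega
    omega
  · intro h
    by_contra hnot
    push_neg at hnot
    have h1 : l.countP (fun x => decide (x ≤ t)) =
        (l.take k).countP (fun x => decide (x ≤ t)) +
        (l.drop k).countP (fun x => decide (x ≤ t)) := by
      rw [← List.countP_append, List.take_append_drop]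
    have h2 : (l.drop k).countP (fun x => decide (x ≤ t)) = 0 := by
      rw [List.countP_eq_zero]
      intro a ha
      simp only [decide_eq_true_eq]
      obtain ⟨i, hi, rfl⟩ := List.mem_iff_getElem.mp ha
      have hki : k + i < l.length := by
        have := (List.length_drop (i := k) (l := l)) ▸ hi; omega
      rw [List.getElem_drop]
      intro hle
      have hkk : l[k] ≤ l[k+i] := by
        have := List.Pairwise.rel_get_of_le hs (a := ⟨k, hk⟩) (b := ⟨k+i, hki⟩)
          (Nat.le_add_right k i)
        simpa [List.get_eq_getElem] using this
      exact absurd (le_trans hkk hle) (not_le.mpr hnot)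
    have h3 : (l.take k).countP (fun x => decide (x ≤ t)) ≤ k := by
      calc _ ≤ (l.take k).length := List.countP_le_length
        _ ≤ k := by rw [List.length_take]; omega
    omega

theorem orderStat_le_iff {m : ℕ} (p : Fin m → ℝ) {k : ℕ} (hk1 : 1 ≤ k) (hkm : k ≤ m) (t : ℝ) :
    orderStat p k ≤ t ↔ k ≤ (Finset.univ.filter (fun j => p j ≤ t)).card := by
  set M := Multiset.map p Finset.univ.val with hM
  set l := Multiset.sort M (· ≤ ·) with hl
  have hlen : l.length = m := by
    rw [hl, Multiset.length_sort, hM, Multiset.card_map]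
    simp
  have hsorted : l.Pairwise (· ≤ ·) := Multiset.pairwise_sort _ _
  have hkl : k - 1 < l.length := by omega
  have h1 : orderStat p k = l[k-1] := List.getD_eq_getElem l 0 hkl
  have h2 : l.countP (fun x => decide (x ≤ t)) =
      (Finset.univ.filter (fun j => p j ≤ t)).card := by
    have : (l : Multiset ℝ).countP (fun x => x ≤ t) = M.countP (fun x => x ≤ t) := by
      rw [hl, Multiset.sort_eq]
    rw [Multiset.coe_countP] at this
    rw [this, hM, Multiset.countP_map]
    rfl
  rw [h1, sorted_getElem_le_iff hsorted hkl t, h2]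
  omega


/-- number of p-values ≤ t -/
noncomputable def N {m : ℕ} (p : Fin m → ℝ) (t : ℝ) : ℕ := (Finset.univ.filter (fun j => p j ≤ t)).card

lemma N_le (p : Fin m → ℝ) (t : ℝ) : N p t ≤ m := by
  classical
  calc N p t ≤ Finset.univ.card := Finset.card_filter_le _ _
    _ = m := by simp

lemma N_mono_t (p : Fin m → ℝ) {t t' : ℝ} (h : t ≤ t') : N p t ≤ N p t' := by
  classical
  apply Finset.card_le_card
  intro j hj
  simp only [Finset.mem_filter, Finset.mem_univ, true_and] at *
  exact le_trans hj h

lemma mem_Kset_iff {m : ℕ} (p : Fin m → ℝ) (α : ℝ) (k : ℕ) :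
    k ∈ {k | k ∈ Finset.Icc 1 m ∧ orderStat p k ≤ α * k / m} ↔
      1 ≤ k ∧ k ≤ m ∧ k ≤ N p (α * k / m) := by
  constructor
  · rintro ⟨hk, ho⟩
    rw [Finset.mem_Icc] at hk
    exact ⟨hk.1, hk.2, (orderStat_le_iff p hk.1 hk.2 _).mp ho⟩
  · rintro ⟨h1, h2, h3⟩
    exact ⟨Finset.mem_Icc.mpr ⟨h1, h2⟩, (orderStat_le_iff p h1 h2 _).mpr h3⟩

lemma kstar_le {m : ℕ} (p : Fin m → ℝ) (α : ℝ) : kstar p α ≤ m := by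
  rw [kstar]
  rcases Set.eq_empty_or_nonempty {k | k ∈ Finset.Icc 1 m ∧ orderStat p k ≤ α * k / m} with he | hne
  · rw [he, csSup_empty]; exact bot_le
  · exact csSup_le hne (fun k hk => (Finset.mem_Icc.mp hk.1).2)

lemma kstar_bddAbove {m : ℕ} (p : Fin m → ℝ) (α : ℝ) :
    BddAbove {k | k ∈ Finset.Icc 1 m ∧ orderStat p k ≤ α * k / m} :=
  ⟨m, fun k hk => (Finset.mem_Icc.mp hk.1).2⟩

lemma le_kstar_of_mem {m : ℕ} {p : Fin m → ℝ} {α : ℝ} {k : ℕ}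
    (hk : k ∈ {k | k ∈ Finset.Icc 1 m ∧ orderStat p k ≤ α * k / m}) : k ≤ kstar p α :=
  le_csSup (kstar_bddAbove p α) hk

/-- N at the BH threshold equals kstar -/
lemma N_kstar {m : ℕ} (hm : 0 < m) (p : Fin m → ℝ) {α : ℝ} (hα : 0 < α) :
    N p (α * (kstar p α) / m) = kstar p α := by
  classical
  set S := {k | k ∈ Finset.Icc 1 m ∧ orderStat p k ≤ α * k / m} with hS
  rcases Set.eq_empty_or_nonempty S with he | hne
  · have hk0 : kstar p α = 0 := by rw [kstar, ← hS, he, csSup_empty]; rfl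
    rw [hk0]
    by_contra hne'
    have h1 : 1 ≤ N p (α * (0:ℕ) / m) := by omega
    have : (1:ℕ) ∈ S := by
      rw [hS, mem_Kset_iff]
      refine ⟨le_refl 1, hm, le_trans h1 (N_mono_t p ?_)⟩
      push_cast
      rw [mul_zero, zero_div]
      positivity
    rw [he] at this; exact this
  · have hmem : kstar p α ∈ S := Nat.sSup_mem hne (kstar_bddAbove p α)
    have h1 := (mem_Kset_iff p α _).mp hmem
    refine le_antisymm ?_ h1.2.2
    by_contra hgt
    push_neg at hgt
    have hk1 : kstar p α + 1 ≤ m := by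
      rcases Nat.lt_or_ge (kstar p α) m with h | h
      · omega
      · have := N_le p (α * (kstar p α) / m); omega
    have : kstar p α + 1 ∈ S := by
      rw [hS, mem_Kset_iff]
      refine ⟨by omega, hk1, ?_⟩
      have : N p (α * (kstar p α) / m) ≤ N p (α * (kstar p α + 1 : ℕ) / m) := by
        apply N_mono_t
        have hmp : (0:ℝ) < m := by exact_mod_cast hm
        have hc : (kstar p α : ℝ) ≤ ((kstar p α + 1 : ℕ) : ℝ) := by push_cast; linarith
        gcongr
      omega
    have := le_kstar_of_mem this
    omega

lemma card_BH {m : ℕ} (hm : 0 < m) (p : Fin m → ℝ) {α : ℝ} (hα : 0 < α) :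
    (BH p α).card = kstar p α := N_kstar hm p hα

lemma N_mono_p {m : ℕ} {p q : Fin m → ℝ} (h : ∀ i, q i ≤ p i) (t : ℝ) : N p t ≤ N q t := by
  classical
  apply Finset.card_le_card
  intro j hj
  simp only [N, Finset.mem_filter, Finset.mem_univ, true_and] at *
  exact le_trans (h j) hj

lemma one_le_kstar_update {m : ℕ} (hm : 0 < m) {α : ℝ} (hα : 0 < α)
    (p : Fin m → ℝ) (j : Fin m) : 1 ≤ kstar (Function.update p j 0) α := by
  apply le_kstar_of_mem
  rw [mem_Kset_iff]
  refine ⟨le_refl 1, hm, ?_⟩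
  have hj : j ∈ Finset.univ.filter (fun i => Function.update p j 0 i ≤ α * (1:ℕ) / m) := by
    simp only [Finset.mem_filter, Finset.mem_univ, true_and, Function.update_self]
    positivity
  exact Finset.card_pos.mpr ⟨j, hj⟩

lemma kstar_le_kstar_update {m : ℕ} {α : ℝ} {p : Fin m → ℝ} {j : Fin m} (hpj : 0 ≤ p j) :
    kstar p α ≤ kstar (Function.update p j 0) α := by
  classical
  set S := {k | k ∈ Finset.Icc 1 m ∧ orderStat p k ≤ α * k / m} with hS
  rcases Set.eq_empty_or_nonempty S with he | hne
  · rw [kstar, ← hS, he, csSup_empty]; exact bot_le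
  · have hmem : kstar p α ∈ S := Nat.sSup_mem hne (kstar_bddAbove p α)
    rw [hS, mem_Kset_iff] at hmem
    apply le_kstar_of_mem
    rw [mem_Kset_iff]
    refine ⟨hmem.1, hmem.2.1, le_trans hmem.2.2 (N_mono_p ?_ _)⟩
    intro i
    rcases eq_or_ne i j with rfl | hij
    · simpa using hpj
    · rw [Function.update_of_ne hij]

lemma N_update_eq {m : ℕ} {p : Fin m → ℝ} {j : Fin m} {t : ℝ}
    (ht : 0 ≤ t) (hpj : p j ≤ t) : N (Function.update p j 0) t = N p t := by
  classical
  unfold N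
  congr 1
  apply Finset.filter_congr
  intro i _
  rcases eq_or_ne i j with rfl | hij
  · simp only [Function.update_self]
    constructor <;> intro _ <;> [exact hpj; exact ht]
  · rw [Function.update_of_ne hij]

lemma kstar_update_eq {m : ℕ} (hm : 0 < m) {α : ℝ} (hα : 0 < α)
    {p : Fin m → ℝ} {j : Fin m} (hpj : 0 ≤ p j)
    (h : p j ≤ α * (kstar (Function.update p j 0) α) / m) :
    kstar p α = kstar (Function.update p j 0) α := by
  refine le_antisymm (kstar_le_kstar_update hpj) ?_
  set q := Function.update p j 0 with hq
  have h1 : 1 ≤ kstar q α := one_le_kstar_update hm hα p j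
  have hSq : {k | k ∈ Finset.Icc 1 m ∧ orderStat q k ≤ α * k / m}.Nonempty := by
    by_contra hc
    rw [Set.not_nonempty_iff_eq_empty] at hc
    have : kstar q α = 0 := by rw [kstar, hc, csSup_empty]; rfl
    omega
  have hmem : kstar q α ∈ _ := Nat.sSup_mem hSq (kstar_bddAbove q α)
  rw [mem_Kset_iff] at hmem
  have ht : (0:ℝ) ≤ α * (kstar q α) / m := by positivity
  apply le_kstar_of_mem
  rw [mem_Kset_iff]
  refine ⟨hmem.1, hmem.2.1, ?_⟩
  calc (kstar q α) ≤ N q (α * (kstar q α) / m) := hmem.2.2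
    _ = N p (α * (kstar q α) / m) := by rw [hq, N_update_eq ht h]

lemma mem_BH_iff_update {m : ℕ} (hm : 0 < m) {α : ℝ} (hα : 0 < α)
    {p : Fin m → ℝ} {j : Fin m} (hpj : 0 ≤ p j) :
    (p j ≤ α * (kstar p α) / m) ↔ (p j ≤ α * (kstar (Function.update p j 0) α) / m) := by
  constructor
  · intro h
    refine le_trans h ?_
    have hmp : (0:ℝ) < m := by exact_mod_cast hm
    have := kstar_le_kstar_update (α := α) hpj
    have hc : (kstar p α : ℝ) ≤ (kstar (Function.update p j 0) α : ℝ) := by exact_mod_cast this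
    gcongr
  · intro h
    rw [kstar_update_eq hm hα hpj h]
    exact h

/-- the pointwise FDP decomposition -/
lemma FDP_eq {m : ℕ} (hm : 0 < m) {α : ℝ} (hα : 0 < α)
    {p : Fin m → ℝ} (hp : ∀ i, 0 ≤ p i) (H0 : Finset (Fin m)) :
    (((BH p α ∩ H0).card : ℝ)) / ((max (BH p α).card 1 : ℕ) : ℝ) =
      ∑ j ∈ H0, (if p j ≤ α * (kstar (Function.update p j 0) α) / m
        then (1:ℝ) / (kstar (Function.update p j 0) α) else 0) := by
  classical
  have hcard : ((BH p α ∩ H0).card : ℝ) = ∑ j ∈ H0, (if j ∈ BH p α then (1:ℝ) else 0) := by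
    have : BH p α ∩ H0 = H0.filter (· ∈ BH p α) := by
      rw [Finset.filter_mem_eq_inter, Finset.inter_comm]
    rw [this, Finset.card_filter]
    push_cast
    rfl
  rw [hcard, Finset.sum_div]
  apply Finset.sum_congr rfl
  intro j hj
  have hmem : j ∈ BH p α ↔ p j ≤ α * (kstar p α) / m := by
    simp [BH]
  by_cases h : p j ≤ α * (kstar (Function.update p j 0) α) / m
  · have hpk : p j ≤ α * (kstar p α) / m := (mem_BH_iff_update hm hα (hp j)).mpr h
    have hkeq : kstar p α = kstar (Function.update p j 0) α := kstar_update_eq hm hα (hp j) h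
    have h1 : 1 ≤ kstar p α := by
      rw [hkeq]; exact one_le_kstar_update hm hα p j
    rw [if_pos (hmem.mpr hpk), if_pos h, card_BH hm p hα]
    rw [max_eq_left h1, hkeq]
  · have hpk : ¬ p j ≤ α * (kstar p α) / m := fun hc => h ((mem_BH_iff_update hm hα (hp j)).mp hc)
    rw [if_neg (fun hc => hpk (hmem.mp hc)), if_neg h, zero_div]


lemma sup_filter_eq {t : Finset ℕ} {P : ℕ → Prop} [DecidablePred P] :
    (t.filter P).sup id = t.sup (fun k => if P k then k else 0) := by
  classical
  induction t using Finset.induction_on with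
  | empty => simp
  | @insert a u ha ih =>
    rw [Finset.filter_insert]
    by_cases h : P a
    · rw [if_pos h, Finset.sup_insert, Finset.sup_insert, if_pos h, ih]; rfl
    · rw [if_neg h, Finset.sup_insert, if_neg h, ih]
      simp

lemma kstar_eq_sup {m : ℕ} (p : Fin m → ℝ) (α : ℝ) :
    kstar p α = ((Finset.Icc 1 m).filter
      (fun k => orderStat p k ≤ α * k / m)).sup id := by
  classical
  set s := (Finset.Icc 1 m).filter (fun k => orderStat p k ≤ α * k / m) with hs
  have hset : {k | k ∈ Finset.Icc 1 m ∧ orderStat p k ≤ α * k / m} = ↑s := by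
    ext k; simp [hs]
  rw [kstar, hset]
  rcases s.eq_empty_or_nonempty with he | hne
  · simp [he]
  · refine le_antisymm (csSup_le (by exact_mod_cast hne) ?_) ?_
    · intro b hb
      exact Finset.le_sup (f := id) (by exact_mod_cast hb)
    · obtain ⟨b, hb, hball⟩ := Finset.exists_mem_eq_sup s hne id
      rw [hball]
      exact le_csSup s.bddAbove (by exact_mod_cast hb)

lemma measurable_N {m : ℕ} (t : ℝ) :
    Measurable (fun p : Fin m → ℝ => (Finset.univ.filter (fun j => p j ≤ t)).card) := by
  classical
  have : (fun p : Fin m → ℝ => (Finset.univ.filter (fun j => p j ≤ t)).card) =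
      fun p => ∑ j : Fin m, if p j ≤ t then 1 else 0 := by
    funext p; rw [Finset.card_filter]
  rw [this]
  apply Finset.measurable_sum
  intro j _
  apply Measurable.ite ?_ measurable_const measurable_const
  exact measurableSet_le (measurable_pi_apply j) measurable_const

lemma measurable_kstar {m : ℕ} (α : ℝ) :
    Measurable (fun p : Fin m → ℝ => kstar p α) := by
  classical
  have h1 : (fun p : Fin m → ℝ => kstar p α) = fun p =>
      (Finset.Icc 1 m).sup (fun k => if orderStat p k ≤ α * k / m then k else 0) := by
    funext p; rw [kstar_eq_sup, sup_filter_eq]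
  rw [h1]
  have key : ∀ t : Finset ℕ, (∀ k ∈ t, 1 ≤ k ∧ k ≤ m) → Measurable (fun p : Fin m → ℝ =>
      t.sup (fun k => if orderStat p k ≤ α * k / m then k else 0)) := by
    intro t
    induction t using Finset.induction_on with
    | empty => intro _; simpa using measurable_const
    | @insert a t ha ih =>
      intro hmem
      have hms : Measurable (fun p : Fin m → ℝ =>
          (if orderStat p a ≤ α * a / m then a else 0)) := by
        apply Measurable.ite ?_ measurable_const measurable_const
        have hset : {p : Fin m → ℝ | orderStat p a ≤ α * a / m} =
            {p : Fin m → ℝ | a ≤ (Finset.univ.filter (fun j => p j ≤ α * a / m)).card} := by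
          ext p
          exact orderStat_le_iff p (hmem a (Finset.mem_insert_self a t)).1
            (hmem a (Finset.mem_insert_self a t)).2 _
        show MeasurableSet {p : Fin m → ℝ | orderStat p a ≤ α * a / m}
        rw [hset]
        exact measurable_N (m := m) (α * a / m) (measurableSet_Ici (a := a))
      have := (hms.sup (ih (fun k hk => hmem k (Finset.mem_insert_of_mem hk))))
      simp only [Finset.sup_insert]; exact this
  apply key
  intro k hk
  exact Finset.mem_Icc.mp hk

lemma indep_K_p {Ω : Type*} [MeasurableSpace Ω] (μ : Measure Ω)
    {m : ℕ} (α : ℝ) (p : Fin m → Ω → ℝ) (hmeas : ∀ j, Measurable (p j))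
    (hindep : iIndepFun p μ) (j : Fin m) :
    IndepFun (fun ω => kstar (Function.update (fun i => p i ω) j 0) α) (p j) μ := by
  classical
  have hdisj : Disjoint ({j}ᶜ : Finset (Fin m)) {j} := by simp
  have base := hindep.indepFun_finset ({j}ᶜ) {j} hdisj hmeas
  set φ : ((({j}ᶜ : Finset (Fin m)) : Type) → ℝ) → ℕ :=
    fun g => kstar (fun i => if h : i ∈ ({j}ᶜ : Finset (Fin m)) then g ⟨i, h⟩ else 0) α with hφdef
  set ψ : ((({j} : Finset (Fin m)) : Type) → ℝ) → ℝ :=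
    fun g => g ⟨j, Finset.mem_singleton_self j⟩ with hψdef
  have hφ : Measurable φ := by
    apply (measurable_kstar α).comp
    apply measurable_pi_lambda
    intro i
    by_cases h : i ∈ ({j}ᶜ : Finset (Fin m))
    · simp only [h, dif_pos]
      exact measurable_pi_apply _
    · simp only [h, dif_neg, not_false_iff]
      exact measurable_const
  have hψ : Measurable ψ := measurable_pi_apply _
  have hcomp := base.comp hφ hψ
  have h1 : (φ ∘ fun a (i : ({j}ᶜ : Finset (Fin m))) => p i a) =
      fun ω => kstar (Function.update (fun i => p i ω) j 0) α := by
    funext ω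
    simp only [Function.comp_apply, hφdef]
    congr 1
    funext i
    rcases eq_or_ne i j with rfl | hij
    · simp [Function.update_self]
    · rw [Function.update_of_ne hij]
      simp [Finset.mem_compl, hij]
  have h2 : (ψ ∘ fun a (i : ({j} : Finset (Fin m))) => p i a) = p j := rfl
  rw [h1, h2] at hcomp
  exact hcomp

end BHproof

open BHproof in
theorem BH_FDR_control {Ω : Type*} [MeasurableSpace Ω]
    (μ : Measure Ω) [IsProbabilityMeasure μ]
    (m : ℕ) (hm : 0 < m) (α : ℝ) (hα : α ∈ Set.Ioo (0 : ℝ) 1)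
    (p : Fin m → Ω → ℝ) (hmeas : ∀ j, Measurable (p j))
    (hrange : ∀ j ω, p j ω ∈ Set.Icc (0 : ℝ) 1)
    (hindep : iIndepFun p μ)
    (H0 : Finset (Fin m))
    (hnull : ∀ j ∈ H0, ∀ t ∈ Set.Icc (0 : ℝ) 1, μ {ω | p j ω ≤ t} ≤ ENNReal.ofReal t) :
    (∫ ω, ((((BH (fun j => p j ω) α) ∩ H0).card : ℝ)
        / ((max (BH (fun j => p j ω) α).card 1 : ℕ) : ℝ)) ∂μ) ≤ α * H0.card / m ∧
    (∫ ω, ((((BH (fun j => p j ω) α) ∩ H0).card : ℝ)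
        / ((max (BH (fun j => p j ω) α).card 1 : ℕ) : ℝ)) ∂μ) ≤ α := by
  classical
  obtain ⟨hα0, hα1⟩ := hα
  have hmR : (0:ℝ) < m := by exact_mod_cast hm
  -- the leave-one-out statistic
  set K : Fin m → Ω → ℕ :=
    fun j ω => kstar (Function.update (fun i => p i ω) j 0) α with hKdef
  have hKmeas : ∀ j, Measurable (K j) := by
    intro j
    apply (measurable_kstar α).comp
    apply measurable_pi_lambda
    intro i
    rcases eq_or_ne i j with rfl | hij
    · simp only [Function.update_self]; exact measurable_const
    · simp only [Function.update_of_ne hij]; exact hmeas i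
  have hK1 : ∀ j ω, 1 ≤ K j ω := fun j ω => one_le_kstar_update hm hα0 _ j
  have hKm : ∀ j ω, K j ω ≤ m := fun j ω => kstar_le _ α
  -- the events
  set A : Fin m → ℕ → Set Ω :=
    fun j k => {ω | K j ω = k} ∩ {ω | p j ω ≤ α * k / m} with hAdef
  have hAmeas : ∀ j k, MeasurableSet (A j k) := by
    intro j k
    exact ((hKmeas j) (measurableSet_singleton k)).inter
      (measurableSet_le (hmeas j) measurable_const)
  -- pointwise identity
  have hpt : ∀ ω, ((((BH (fun j => p j ω) α) ∩ H0).card : ℝ)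
      / ((max (BH (fun j => p j ω) α).card 1 : ℕ) : ℝ)) =
      ∑ j ∈ H0, ∑ k ∈ Finset.Icc 1 m, (A j k).indicator (fun _ => (1:ℝ)/k) ω := by
    intro ω
    rw [FDP_eq hm hα0 (fun i => (hrange i ω).1) H0]
    apply Finset.sum_congr rfl
    intro j hj
    have hsum : ∑ k ∈ Finset.Icc 1 m, (A j k).indicator (fun _ => (1:ℝ)/k) ω =
        if p j ω ≤ α * (K j ω) / m then (1:ℝ)/(K j ω) else 0 := by
      simp only [hAdef]
      rw [Finset.sum_eq_single_of_mem (K j ω) (Finset.mem_Icc.mpr ⟨hK1 j ω, hKm j ω⟩)]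
      · by_cases h : p j ω ≤ α * (K j ω) / m
        · simp [Set.indicator_apply, Set.mem_inter_iff, Set.mem_setOf_eq, h]
        · simp [Set.indicator_apply, Set.mem_inter_iff, Set.mem_setOf_eq, h]
      · intro k _ hk
        simp only [Set.indicator_apply, Set.mem_inter_iff, Set.mem_setOf_eq]
        rw [if_neg]
        rintro ⟨h1, -⟩
        exact hk (h1.symm)
    rw [hsum]
  -- integrability
  have hint : ∀ j k, Integrable ((A j k).indicator (fun _ => (1:ℝ)/k)) μ :=
    fun j k => (integrable_const _).indicator (hAmeas j k)
  -- compute the integral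
  have hI : (∫ ω, ((((BH (fun j => p j ω) α) ∩ H0).card : ℝ)
      / ((max (BH (fun j => p j ω) α).card 1 : ℕ) : ℝ)) ∂μ) =
      ∑ j ∈ H0, ∑ k ∈ Finset.Icc 1 m, (μ (A j k)).toReal * ((1:ℝ)/k) := by
    rw [show (fun ω => ((((BH (fun j => p j ω) α) ∩ H0).card : ℝ)
      / ((max (BH (fun j => p j ω) α).card 1 : ℕ) : ℝ))) =
      (fun ω => ∑ j ∈ H0, ∑ k ∈ Finset.Icc 1 m, (A j k).indicator (fun _ => (1:ℝ)/k) ω)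
      from funext hpt]
    rw [integral_finset_sum _ (fun j _ => integrable_finset_sum _ (fun k _ => hint j k))]
    apply Finset.sum_congr rfl
    intro j _
    rw [integral_finset_sum _ (fun k _ => hint j k)]
    apply Finset.sum_congr rfl
    intro k _
    rw [integral_indicator_const _ (hAmeas j k)]
    rfl
  -- bound each term
  have hbound : ∀ j ∈ H0, ∀ k ∈ Finset.Icc 1 m,
      (μ (A j k)).toReal * ((1:ℝ)/k) ≤ (μ {ω | K j ω = k}).toReal * (α / m) := by
    intro j hj k hk
    rw [Finset.mem_Icc] at hk
    have hk0 : (0:ℝ) < k := by exact_mod_cast hk.1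
    have htk : α * k / m ∈ Set.Icc (0:ℝ) 1 := by
      constructor
      · positivity
      · have hkm' : (k:ℝ) ≤ m := by exact_mod_cast hk.2
        rw [div_le_one hmR]
        nlinarith
    have hprod : μ (A j k) = μ {ω | K j ω = k} * μ {ω | p j ω ≤ α * k / m} := by
      have hip := (indep_K_p μ α p hmeas hindep j).measure_inter_preimage_eq_mul
        (μ := μ) {k} (Set.Iic (α * k / m)) (measurableSet_singleton k) measurableSet_Iic
      exact hip
    have hle : μ (A j k) ≤ μ {ω | K j ω = k} * ENNReal.ofReal (α * k / m) := by
      rw [hprod]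
      exact mul_le_mul_right (hnull j hj _ htk) _
    have hfin : μ {ω | K j ω = k} * ENNReal.ofReal (α * k / m) ≠ ⊤ :=
      ENNReal.mul_ne_top (measure_ne_top μ _) ENNReal.ofReal_ne_top
    have h1 : (μ (A j k)).toReal ≤ (μ {ω | K j ω = k}).toReal * (α * k / m) := by
      have := ENNReal.toReal_mono hfin hle
      rwa [ENNReal.toReal_mul, ENNReal.toReal_ofReal htk.1] at this
    calc (μ (A j k)).toReal * ((1:ℝ)/k)
        ≤ ((μ {ω | K j ω = k}).toReal * (α * k / m)) * ((1:ℝ)/k) := by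
          apply mul_le_mul_of_nonneg_right h1; positivity
      _ = (μ {ω | K j ω = k}).toReal * (α / m) := by
          field_simp
  -- sum over k
  have hsumk : ∀ j ∈ H0, ∑ k ∈ Finset.Icc 1 m, (μ {ω | K j ω = k}).toReal * (α / m) ≤ α / m := by
    intro j hj
    rw [← Finset.sum_mul]
    have hdisj : (↑(Finset.Icc 1 m) : Set ℕ).PairwiseDisjoint (fun k => {ω | K j ω = k}) := by
      intro a _ b _ hab
      apply Set.disjoint_left.mpr
      intro ω ha hb
      exact hab (ha.symm.trans hb)
    have hμsum : ∑ k ∈ Finset.Icc 1 m, μ {ω | K j ω = k} ≤ 1 := by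
      rw [← measure_biUnion_finset hdisj (fun k _ => (hKmeas j) (measurableSet_singleton k))]
      calc μ _ ≤ μ Set.univ := measure_mono (Set.subset_univ _)
        _ = 1 := measure_univ
    have htR : ∑ k ∈ Finset.Icc 1 m, (μ {ω | K j ω = k}).toReal =
        (∑ k ∈ Finset.Icc 1 m, μ {ω | K j ω = k}).toReal :=
      (ENNReal.toReal_sum (fun k _ => measure_ne_top μ _)).symm
    have h1 : ∑ k ∈ Finset.Icc 1 m, (μ {ω | K j ω = k}).toReal ≤ 1 := by
      rw [htR]
      calc (∑ k ∈ Finset.Icc 1 m, μ {ω | K j ω = k}).toReal ≤ ENNReal.toReal 1 :=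
            ENNReal.toReal_mono (by simp) hμsum
        _ = 1 := ENNReal.toReal_one
    have hαm : (0:ℝ) ≤ α / m := by positivity
    nlinarith
  have hfirst : (∫ ω, ((((BH (fun j => p j ω) α) ∩ H0).card : ℝ)
      / ((max (BH (fun j => p j ω) α).card 1 : ℕ) : ℝ)) ∂μ) ≤ α * H0.card / m := by
    rw [hI]
    calc ∑ j ∈ H0, ∑ k ∈ Finset.Icc 1 m, (μ (A j k)).toReal * ((1:ℝ)/k)
        ≤ ∑ j ∈ H0, (α / m) := by
          apply Finset.sum_le_sum
          intro j hj
          calc ∑ k ∈ Finset.Icc 1 m, (μ (A j k)).toReal * ((1:ℝ)/k)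
              ≤ ∑ k ∈ Finset.Icc 1 m, (μ {ω | K j ω = k}).toReal * (α / m) :=
                Finset.sum_le_sum (fun k hk => hbound j hj k hk)
            _ ≤ α / m := hsumk j hj
      _ = H0.card * (α / m) := by rw [Finset.sum_const, nsmul_eq_mul]
      _ = α * H0.card / m := by ring
  refine ⟨hfirst, le_trans hfirst ?_⟩
  have hcard : (H0.card : ℝ) ≤ m := by
    have : H0.card ≤ m := by simpa using Finset.card_le_univ H0
    exact_mod_cast this
  calc α * H0.card / m ≤ α * m / m := by gcongr
    _ = α := by field_simp
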